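/- Let n ≥ 2 and let a = (a_1,…,a_n) be a vector of nonnegative integers such that a_j ≥ a_{j−1} − a_{j−2} + ⋯ + (−1)^{i−1} a_{j−i} + ⋯ + (−1)^{j−2} a_1 for each j = 2, …, n. Suppose y = (y_1,…,y_{n−1}) is a vector of nonnegative real numbers satisfying y_1 ≤ a_1, y_{j−1} + y_j ≤ a_j for each j = 2, …, n−1, and y_{n−1} ≤ a_n. Let h = ⌈y_1 + ⋯ + y_{n−1}⌉. Then the monomial x^a = x_1^{a_1} ⋯ x_n^{a_n} is divisible by a product of h monomials from the set {x_1 x_2, x_2 x_3, …, x_{n−1} x_n}. -/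

import Mathlib

open MvPolynomial

lemma prod_pair_eq (K : Type*) [Field K] (c : ℕ → ℕ) (hc0 : c 0 = 0) (m : ℕ) :
    ∏ i ∈ Finset.Icc 1 m, ((X i * X (i + 1) : MvPolynomial ℕ K) ^ c i)
      = (∏ i ∈ Finset.Icc 1 m, (X i : MvPolynomial ℕ K) ^ (c (i - 1) + c i))
          * X (m + 1) ^ c m := by
  induction m with
  | zero => simp [hc0]
  | succ m ih =>
      rw [Finset.prod_Icc_succ_top (by omega), Finset.prod_Icc_succ_top (by omega), ih]
      have h1 : (m + 1) - 1 = m := by omega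
      rw [h1, pow_add, mul_pow]
      ring

theorem divisible_of_alternating_conditions_short
    (K : Type*) [Field K] (n : ℕ) (hn : 2 ≤ n)
    (a : ℕ → ℕ) (y : ℕ → ℝ)
    (ha : ∀ j ∈ Finset.Icc 2 n,
      (∑ i ∈ Finset.Icc 1 (j - 1), (-1 : ℤ) ^ (i - 1) * (a (j - i) : ℤ)) ≤ (a j : ℤ))
    (hy0 : ∀ i ∈ Finset.Icc 1 (n - 1), 0 ≤ y i)
    (hy1 : y 1 ≤ (a 1 : ℝ))
    (hy2 : ∀ j ∈ Finset.Icc 2 (n - 1), y (j - 1) + y j ≤ (a j : ℝ))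
    (hy3 : y (n - 1) ≤ (a n : ℝ)) :
    ∃ c : ℕ → ℕ,
      (∑ i ∈ Finset.Icc 1 (n - 1), c i = ⌈∑ i ∈ Finset.Icc 1 (n - 1), y i⌉₊) ∧
      (∏ i ∈ Finset.Icc 1 (n - 1), ((X i * X (i + 1) : MvPolynomial ℕ K) ^ c i)) ∣
        ∏ i ∈ Finset.Icc 1 n, (X i : MvPolynomial ℕ K) ^ a i := by
  classical
  set S : ℕ → ℝ := fun j => ∑ i ∈ Finset.Icc 1 j, y i with hS
  set f : ℕ → ℕ := fun j => ⌈S j⌉₊ with hf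
  have hS0 : S 0 = 0 := by simp [hS]
  have hf0 : f 0 = 0 := by simp [hf, hS0]
  have hSstep : ∀ i, 1 ≤ i → S i = S (i - 1) + y i := by
    intro i hi
    obtain ⟨k, rfl⟩ : ∃ k, i = k + 1 := ⟨i - 1, by omega⟩
    simp only [hS, Nat.add_sub_cancel]
    rw [Finset.sum_Icc_succ_top (by omega)]
  have hSnonneg : ∀ j, j ≤ n - 1 → 0 ≤ S j := by
    intro j hj
    apply Finset.sum_nonneg
    intro i hi
    simp only [Finset.mem_Icc] at hi
    exact hy0 i (Finset.mem_Icc.mpr ⟨hi.1, le_trans hi.2 hj⟩)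
  have hmono : ∀ i, 1 ≤ i → i ≤ n - 1 → f (i - 1) ≤ f i := by
    intro i h1 h2
    apply Nat.ceil_le_ceil
    rw [hSstep i h1]
    have := hy0 i (Finset.mem_Icc.mpr ⟨h1, h2⟩)
    linarith
  set c : ℕ → ℕ := fun i => if i ≤ n - 1 then f i - f (i - 1) else 0 with hc
  have hc0 : c 0 = 0 := by simp [hc, hf0]
  have hcn : c n = 0 := by simp only [hc]; rw [if_neg (by omega)]
  have key : ∀ i ∈ Finset.Icc 1 n, c (i - 1) + c i ≤ a i := by
    intro i hi
    simp only [Finset.mem_Icc] at hi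
    rcases eq_or_lt_of_le hi.1 with h1 | h1
    · -- i = 1
      have : c 1 ≤ a 1 := by
        simp only [hc]
        rw [if_pos (by omega)]
        have hf1 : f 1 ≤ a 1 := by
          apply Nat.ceil_le.mpr
          rw [hSstep 1 le_rfl]
          simpa [hS0] using hy1
        omega
      rw [← h1]
      simpa [hc0] using this
    · rcases eq_or_lt_of_le hi.2 with h2 | h2
      · -- i = n
        subst h2
        have hb : f (i - 1) ≤ f (i - 2) + a i := by
          calc f (i - 1) ≤ ⌈S (i - 2) + (a i : ℕ)⌉₊ := by
                apply Nat.ceil_le_ceil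
                have := hSstep (i - 1) (by omega)
                have h12 : i - 1 - 1 = i - 2 := by omega
                rw [this, h12]
                linarith [hy3]
            _ = f (i - 2) + a i := Nat.ceil_add_natCast (hSnonneg (i - 2) (by omega)) _
        have hcv : c (i - 1) = f (i - 1) - f (i - 2) := by
          simp only [hc]
          rw [if_pos (by omega)]
          congr 1
        rw [hcn, hcv]
        omega
      · -- 2 ≤ i ≤ n-1
        have hb : f i ≤ f (i - 2) + a i := by
          calc f i ≤ ⌈S (i - 2) + (a i : ℕ)⌉₊ := by
                apply Nat.ceil_le_ceil
                rw [hSstep i (by omega), hSstep (i - 1) (by omega)]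
                have h12 : i - 1 - 1 = i - 2 := by omega
                rw [h12]
                have := hy2 i (Finset.mem_Icc.mpr ⟨by omega, by omega⟩)
                linarith
            _ = f (i - 2) + a i := Nat.ceil_add_natCast (hSnonneg (i - 2) (by omega)) _
        have hm1 : f (i - 2) ≤ f (i - 1) := by
          have := hmono (i - 1) (by omega) (by omega)
          have h12 : i - 1 - 1 = i - 2 := by omega
          rwa [h12] at this
        have hm2 : f (i - 1) ≤ f i := hmono i (by omega) (by omega)
        have hcv1 : c (i - 1) = f (i - 1) - f (i - 2) := by
          simp only [hc]
          rw [if_pos (by omega)]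
          congr 1
        have hcv2 : c i = f i - f (i - 1) := by
          simp only [hc]; rw [if_pos (by omega)]
        rw [hcv1, hcv2]
        omega
  refine ⟨c, ?_, ?_⟩
  · -- telescoping sum
    have htel : ∀ m, m ≤ n - 1 → ∑ i ∈ Finset.Icc 1 m, c i = f m := by
      intro m
      induction m with
      | zero => intro _; simp [hf0]
      | succ m ih =>
          intro hm
          rw [Finset.sum_Icc_succ_top (by omega), ih (by omega)]
          have hcv : c (m + 1) = f (m + 1) - f m := by
            simp only [hc]
            rw [if_pos (by omega)]
            congr 1
          have := hmono (m + 1) (by omega) (by omega)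
          simp only [Nat.add_sub_cancel] at this
          omega
    rw [htel (n - 1) le_rfl]
  · have heq : (∏ i ∈ Finset.Icc 1 (n - 1), ((X i * X (i + 1) : MvPolynomial ℕ K) ^ c i))
        = ∏ i ∈ Finset.Icc 1 n, (X i : MvPolynomial ℕ K) ^ (c (i - 1) + c i) := by
      rw [prod_pair_eq K c hc0 (n - 1)]
      have hn1 : n - 1 + 1 = n := by omega
      rw [hn1]
      rw [show (Finset.Icc 1 n) = Finset.Icc 1 (n - 1 + 1) by rw [hn1],
        Finset.prod_Icc_succ_top (by omega), hn1]
      rw [hcn, Nat.add_zero]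
    rw [heq]
    apply Finset.prod_dvd_prod_of_dvd
    intro i hi
    exact pow_dvd_pow _ (key i hi)
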